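/- Fix a positive integer m and an integer a with 0 < a < m. Define c: ℤ → ℚ by c(k) = k'(m−k')/m where k' is the unique integer with 0 ≤ k' < m and k' ≡ a·k (mod m). Then for all positive integers n, the quantity n²·c(1) − c(n) equals n²·a(m−a)/m − n'(m−n')/m, where n' is the least nonnegative residue of a·n modulo m; moreover n²·c(1) − c(n) is a nonnegative rational number. -/

import Mathlib

/-- Fix `m ≥ 2` and `0 < a < m`.  Define `c : ℤ → ℚ` by
`c k = k'(m − k')/m` where `k'` is the least nonnegative residue of `a·k` mod `m`.
Then for all positive integers `n`, `n² c(1) − c(n) = n² a(m−a)/m − n'(m−n')/m`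
where `n'` is the least nonnegative residue of `a·n` mod `m`, and `n² c(1) − c(n) ≥ 0`. -/
theorem stmt_4 (m : ℕ) (hm : 2 ≤ m) (a : ℤ) (ha : 0 < a) (ham : a < (m : ℤ))
    (c : ℤ → ℚ)
    (hc : ∀ k : ℤ, c k = ((a * k % (m : ℤ)) * ((m : ℤ) - a * k % (m : ℤ)) : ℤ) / (m : ℚ)) :
    ∀ n : ℕ, 0 < n →
      (n : ℚ) ^ 2 * c 1 - c (n : ℤ)
          = (n : ℚ) ^ 2 * ((a * ((m : ℤ) - a) : ℤ) : ℚ) / (m : ℚ)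
            - (((a * n % (m : ℤ)) * ((m : ℤ) - a * n % (m : ℤ)) : ℤ) : ℚ) / (m : ℚ)
        ∧ 0 ≤ (n : ℚ) ^ 2 * c 1 - c (n : ℤ) := by
  intro n hn
  have hm0 : (0:ℤ) < (m:ℤ) := by exact_mod_cast Nat.lt_of_lt_of_le (by norm_num) hm
  have ha1 : a % (m:ℤ) = a := Int.emod_eq_of_lt (le_of_lt ha) ham
  -- the equality part
  have heq : (n : ℚ) ^ 2 * c 1 - c (n : ℤ)
          = (n : ℚ) ^ 2 * ((a * ((m : ℤ) - a) : ℤ) : ℚ) / (m : ℚ)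
            - (((a * n % (m : ℤ)) * ((m : ℤ) - a * n % (m : ℤ)) : ℤ) : ℚ) / (m : ℚ) := by
    rw [hc 1, hc (n:ℤ)]
    rw [mul_one, ha1]
    push_cast
    ring
  refine ⟨heq, ?_⟩
  rw [heq]
  -- the key integer inequality
  set e : ℤ := min a ((m:ℤ) - a) with he
  have hD : ∀ k : ℕ, min (a * k % (m:ℤ)) ((m:ℤ) - a * k % (m:ℤ)) ≤ (k:ℤ) * e := by
    intro k
    induction k with
    | zero => simp
    | succ k ih =>
      have h2 : a * ((k:ℤ)+1) % (m:ℤ) = (a * k % (m:ℤ) + a) % (m:ℤ) := by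
        conv_lhs => rw [mul_add, mul_one, Int.add_emod, ha1]
      set u := a * (k:ℤ) % (m:ℤ) with hu
      have hu0 : 0 ≤ u := Int.emod_nonneg _ (ne_of_gt hm0)
      have hum : u < (m:ℤ) := Int.emod_lt_of_pos _ hm0
      have hw : (u + a) % (m:ℤ) = if u + a < (m:ℤ) then u + a else u + a - (m:ℤ) := by
        split
        · apply Int.emod_eq_of_lt <;> omega
        · have h3 : (u + a) % (m:ℤ) = (u + a - (m:ℤ)) % (m:ℤ) := by
            conv_lhs => rw [show u + a = (u + a - (m:ℤ)) + 1 * (m:ℤ) by ring,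
              Int.add_mul_emod_self_right]
          rw [h3]
          have h4 : (u + a - (m:ℤ)) % (m:ℤ) = u + a - (m:ℤ) := by
            apply Int.emod_eq_of_lt <;> omega
          omega
      set K := (k:ℤ) * e with hK
      have hstep : ((k:ℤ)+1) * e = K + e := by ring
      push_cast
      rw [h2, hstep, hw]
      have he1 : e ≤ a := min_le_left _ _
      have he2 : e ≤ (m:ℤ) - a := min_le_right _ _
      split <;> omega
  set N : ℤ := a * n % (m:ℤ) with hN
  have hN0 : 0 ≤ N := Int.emod_nonneg _ (ne_of_gt hm0)
  have hNm : N < (m:ℤ) := Int.emod_lt_of_pos _ hm0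
  set d : ℤ := min N ((m:ℤ) - N) with hd
  have hdn : d ≤ (n:ℤ) * e := hD n
  have hd2 : 2 * d ≤ (m:ℤ) := by simp [hd]; omega
  have hd0 : 0 ≤ d := by simp [hd]; omega
  have he2 : 2 * e ≤ (m:ℤ) := by simp [he]; omega
  have he0 : 0 ≤ e := by simp [he]; omega
  have hprodN : N * ((m:ℤ) - N) = d * ((m:ℤ) - d) := by
    rcases min_cases N ((m:ℤ) - N) with ⟨h1, _⟩ | ⟨h1, _⟩ <;> rw [hd, h1] <;> ring
  have hprode : a * ((m:ℤ) - a) = e * ((m:ℤ) - e) := by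
    rcases min_cases a ((m:ℤ) - a) with ⟨h1, _⟩ | ⟨h1, _⟩ <;> rw [he, h1] <;> ring
  have hkey : N * ((m:ℤ) - N) ≤ (n:ℤ)^2 * (a * ((m:ℤ) - a)) := by
    rw [hprodN, hprode]
    rcases eq_or_lt_of_le (show 1 ≤ n from hn) with h1 | h2
    · -- n = 1
      have : (n:ℤ) = 1 := by omega
      rw [this]
      have hde : d ≤ e := by rw [this] at hdn; linarith
      nlinarith [mul_nonneg (sub_nonneg.2 hde) (show (0:ℤ) ≤ (m:ℤ) - e - d by omega)]
    · -- n ≥ 2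
      have hn2 : (2:ℤ) ≤ (n:ℤ) := by exact_mod_cast h2
      have hmn : (m:ℤ) ≤ (n:ℤ) * ((m:ℤ) - e) := by nlinarith
      calc d * ((m:ℤ) - d) ≤ d * (m:ℤ) := by nlinarith
        _ ≤ ((n:ℤ) * e) * (m:ℤ) := by nlinarith
        _ ≤ ((n:ℤ) * e) * ((n:ℤ) * ((m:ℤ) - e)) := by
            have : 0 ≤ (n:ℤ) * e := by positivity
            nlinarith
        _ = (n:ℤ)^2 * (e * ((m:ℤ) - e)) := by ring
  have hmQ : (0:ℚ) < (m:ℚ) := by exact_mod_cast hm0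
  rw [sub_nonneg, div_le_div_iff₀ hmQ hmQ]
  have hQ : ((N * ((m:ℤ) - N) : ℤ) : ℚ) ≤ (n:ℚ)^2 * ((a * ((m:ℤ) - a) : ℤ) : ℚ) := by
    exact_mod_cast hkey
  nlinarith [mul_le_mul_of_nonneg_right hQ hmQ.le]
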